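/- Let A be a C*-algebra and let E ⊆ A be a selfadjoint subspace that generates A (the smallest closed star-subalgebra of A containing E is A). Then the following are equivalent: (1) E is separating for A, i.e., every positive functional ψ on A with ψ|_E = 0 satisfies ψ = 0; (2) for every n ∈ ℕ, Mₙ(E) is separating for Mₙ(A), i.e., every positive functional Ψ on Mₙ(A) vanishing on Mₙ(E) satisfies Ψ = 0. -/

import Mathlib

open scoped ComplexOrder

noncomputable section

/-- The `n`-th matrix level `Mₙ(E)` of a subspace `E` of a C*-algebra `A`, realized inside a
C*-algebra `M` given together with a ⋆-algebra isomorphism `e : Mₙ(A) ≃⋆ₐ[ℂ] M`. -/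
def matrixLevelSet {A M : Type*} [NonUnitalCStarAlgebra A] [NonUnitalCStarAlgebra M] {n : ℕ}
    (E : Submodule ℂ A) (e : Matrix (Fin n) (Fin n) A ≃⋆ₐ[ℂ] M) : Set M :=
  {X : M | ∀ i j, e.symm X i j ∈ E}

section Aux

variable {A Mn : Type*} [NonUnitalCStarAlgebra A] [NonUnitalCStarAlgebra Mn] {n : ℕ}

lemma star_stdBasisMatrix' (i j : Fin n) (a : A) :
    star (Matrix.single i j a) = Matrix.single j i (star a) := by
  ext k l
  rw [Matrix.star_apply]
  by_cases h1 : j = k <;> by_cases h2 : i = l <;>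
    simp [Matrix.single, h1, h2, eq_comm, and_comm]

variable (e : Matrix (Fin n) (Fin n) A ≃⋆ₐ[ℂ] Mn)

/-- The diagonal embedding `A → Mₙ` through the `(j,j)` entry, as a star hom. -/
def diagStarHom (j : Fin n) : A →⋆ₙₐ[ℂ] Mn where
  toFun a := e (Matrix.single j j a)
  map_add' a b := by
    show e (Matrix.single j j (a + b))
      = e (Matrix.single j j a) + e (Matrix.single j j b)
    rw [← map_add, Matrix.single_add]
  map_smul' c a := by
    show e (Matrix.single j j (c • a)) = c • e (Matrix.single j j a)
    rw [← Matrix.smul_single, map_smul]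
  map_zero' := by
    show e (Matrix.single j j (0 : A)) = 0
    rw [Matrix.single_zero, map_zero]
  map_mul' a b := by
    show e (Matrix.single j j (a * b))
      = e (Matrix.single j j a) * e (Matrix.single j j b)
    rw [← map_mul, Matrix.single_mul_single_same]
  map_star' a := by
    show e (Matrix.single j j (star a)) = star (e (Matrix.single j j a))
    rw [← map_star, star_stdBasisMatrix']

lemma diagStarHom_injective (j : Fin n) : Function.Injective (diagStarHom e j) := by
  intro a b h
  have h2 := congrArg (fun X => (e.symm X) j j) h
  simpa [diagStarHom] using h2

lemma norm_e_stdBasisMatrix (i j : Fin n) (a : A) :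
    ‖e (Matrix.single i j a)‖ = ‖a‖ := by
  have h1 : star (e (Matrix.single i j a)) * e (Matrix.single i j a)
      = diagStarHom e j (star a * a) := by
    rw [← map_star, ← map_mul, star_stdBasisMatrix', Matrix.single_mul_single_same]
    rfl
  have h2 : ‖star (e (Matrix.single i j a)) * e (Matrix.single i j a)‖
      = ‖a‖ * ‖a‖ := by
    rw [h1, NonUnitalStarAlgHom.norm_map _ (diagStarHom_injective e j),
      CStarRing.norm_star_mul_self]
  rw [CStarRing.norm_star_mul_self] at h2
  exact mul_self_inj (norm_nonneg _) (norm_nonneg _) |>.mp h2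

/-- The matrix `(uᵢ conj(vⱼ) • a)ᵢⱼ`. -/
def matT (a : A) (u v : Fin n → ℂ) : Matrix (Fin n) (Fin n) A :=
  Matrix.of fun i j => (u i * star (v j)) • a

lemma matT_add (a b : A) (u v : Fin n → ℂ) :
    matT (a + b) u v = matT a u v + matT b u v := by
  ext i j; simp [matT, smul_add]

lemma matT_smul (c : ℂ) (a : A) (u v : Fin n → ℂ) :
    matT (c • a) u v = c • matT a u v := by
  ext i j
  simp only [matT, Matrix.of_apply, Matrix.smul_apply]
  exact smul_comm _ _ _

lemma matT_zero (u v : Fin n → ℂ) : matT (0 : A) u v = 0 := by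
  ext i j; simp [matT]

lemma matT_single (a : A) (i j : Fin n) :
    matT a (Pi.single i 1) (Pi.single j 1) = Matrix.single i j a := by
  ext k l
  by_cases h1 : i = k <;> by_cases h2 : j = l <;>
    simp [matT, Matrix.single, Pi.single_apply, h1, h2, eq_comm]

lemma matT_eq_sum (a : A) (u v : Fin n → ℂ) :
    matT a u v = ∑ i, ∑ j, (u i * star (v j)) • Matrix.single i j a := by
  ext k l
  rw [Matrix.sum_apply]
  rw [Finset.sum_eq_single k]
  · rw [Matrix.sum_apply, Finset.sum_eq_single l]
    · simp [matT]
    · intro b _ hb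
      rw [Matrix.smul_apply, Matrix.single_apply_of_col_ne k k hb a, smul_zero]
    · simp
  · intro b _ hb
    rw [Matrix.sum_apply]
    refine Finset.sum_eq_zero fun c _ => ?_
    rw [Matrix.smul_apply, Matrix.single_apply_of_row_ne hb c l a, smul_zero]
  · simp

/-- `a ↦ e (matT a u v)` as a linear map. -/
def matTLin (u v : Fin n → ℂ) : A →ₗ[ℂ] Mn where
  toFun a := e (matT a u v)
  map_add' a b := by
    show e (matT (a + b) u v) = e (matT a u v) + e (matT b u v)
    rw [matT_add, map_add]
  map_smul' c a := by
    show e (matT (c • a) u v) = c • e (matT a u v)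
    rw [matT_smul, map_smul]

lemma matTLin_bound (u v : Fin n → ℂ) (a : A) :
    ‖matTLin e u v a‖ ≤ (∑ i, ∑ j, ‖u i * star (v j)‖) * ‖a‖ := by
  have : matTLin e u v a = ∑ i, ∑ j, (u i * star (v j)) • e (Matrix.single i j a) := by
    simp only [matTLin, LinearMap.coe_mk, AddHom.coe_mk]
    rw [matT_eq_sum, map_sum]
    refine Finset.sum_congr rfl fun i _ => ?_
    rw [map_sum]
    exact Finset.sum_congr rfl fun j _ => map_smul e _ _
  rw [this, Finset.sum_mul]
  refine (norm_sum_le _ _).trans (Finset.sum_le_sum fun i _ => ?_)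
  rw [Finset.sum_mul]
  refine (norm_sum_le _ _).trans (Finset.sum_le_sum fun j _ => ?_)
  rw [norm_smul, norm_e_stdBasisMatrix]

/-- `a ↦ e (matT a u v)` as a continuous linear map. -/
def matTCLM (u v : Fin n → ℂ) : A →L[ℂ] Mn :=
  (matTLin e u v).mkContinuous _ (matTLin_bound e u v)

lemma matTCLM_apply (u v : Fin n → ℂ) (a : A) : matTCLM e u v a = e (matT a u v) := rfl

lemma matT_nonneg [PartialOrder A] [StarOrderedRing A] [PartialOrder Mn] [StarOrderedRing Mn]
    (hn : 0 < n) (u : Fin n → ℂ) {a : A} (ha : 0 ≤ a) : 0 ≤ e (matT a u u) := by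
  rw [StarOrderedRing.nonneg_iff] at ha
  induction ha using AddSubmonoid.closure_induction with
  | mem x hx =>
    obtain ⟨s, rfl⟩ := hx
    set R : Matrix (Fin n) (Fin n) A :=
      Matrix.of fun k j => if k = (⟨0, hn⟩ : Fin n) then (star (u j)) • s else 0 with hR
    have hT : matT (star s * s) u u = star R * R := by
      ext i j
      rw [Matrix.mul_apply]
      rw [Finset.sum_eq_single (⟨0, hn⟩ : Fin n)]
      · rw [Matrix.star_apply]
        simp only [hR, Matrix.of_apply, if_pos rfl, matT, if_true]
        rw [star_smul, star_star, smul_mul_smul_comm]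
      · intro b _ hb
        simp [Matrix.star_apply, hR, hb]
      · simp
    rw [hT, map_mul, map_star]
    exact star_mul_self_nonneg _
  | zero => rw [matT_zero, map_zero]
  | add x y _ _ hx hy =>
    rw [matT_add, map_add]
    exact add_nonneg hx hy

end Aux

/-- Let `E` be a selfadjoint subspace generating the C*-algebra `A`.
Then `E` is separating for `A` if and only if `Mₙ(E)` is separating for `Mₙ(A)` for
every `n`. -/
theorem stmt_6 {A : Type*} [NonUnitalCStarAlgebra A] [PartialOrder A] [StarOrderedRing A]
    (E : Submodule ℂ A) (hEclosed : IsClosed (E : Set A)) (hEstar : ∀ x ∈ E, star x ∈ E)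
    (hgen : (NonUnitalStarAlgebra.adjoin ℂ (E : Set A)).topologicalClosure = ⊤)
    (M : ℕ → Type*) [∀ n, NonUnitalCStarAlgebra (M n)] [∀ n, PartialOrder (M n)]
    [∀ n, StarOrderedRing (M n)]
    (e : ∀ n, Matrix (Fin n) (Fin n) A ≃⋆ₐ[ℂ] M n) :
    (∀ ψ : A →L[ℂ] ℂ, (∀ a : A, 0 ≤ a → 0 ≤ ψ a) → (∀ x ∈ E, ψ x = 0) → ψ = 0) ↔
      (∀ (n : ℕ) (Ψ : M n →L[ℂ] ℂ), (∀ X : M n, 0 ≤ X → 0 ≤ Ψ X) →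
        (∀ X ∈ matrixLevelSet E (e n), Ψ X = 0) → Ψ = 0) := by
  constructor
  · -- forward direction
    intro hsep n Ψ hpos hvan
    ext X
    show Ψ X = 0
    rcases Nat.eq_zero_or_pos n with hn | hn
    · subst hn
      have hX0 : (e 0).symm X = 0 := by ext i j; exact i.elim0
      have : X = 0 := by
        rw [← (e 0).apply_symm_apply X, hX0, map_zero]
      rw [this, map_zero]
    · -- diagonal functionals vanish
      have hdiag : ∀ (u : Fin n → ℂ) (a : A), Ψ ((e n) (matT a u u)) = 0 := by
        intro u a
        have hψ : Ψ.comp (matTCLM (e n) u u) = 0 := by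
          refine hsep _ (fun b hb => ?_) (fun x hx => ?_)
          · exact hpos _ (matT_nonneg (e n) hn u hb)
          · refine hvan _ (fun i j => ?_)
            show ((e n).symm ((e n) (matT x u u))) i j ∈ E
            rw [StarAlgEquiv.symm_apply_apply]
            exact Submodule.smul_mem E _ hx
        have := ContinuousLinearMap.ext_iff.mp hψ a
        simpa [matTCLM_apply] using this
      -- polarization: all matT vanish
      have hall : ∀ (a : A) (u v : Fin n → ℂ), Ψ ((e n) (matT a u v)) = 0 := by
        intro a u v
        have L1 : ∀ (u w v : Fin n → ℂ), matT a (u + w) v = matT a u v + matT a w v := by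
          intro u w v; ext i j
          simp [matT, add_mul, add_smul]
        have L2 : ∀ (u v w : Fin n → ℂ), matT a u (v + w) = matT a u v + matT a u w := by
          intro u v w; ext i j
          simp [matT, mul_add, add_smul]
        have L3 : ∀ (c : ℂ) (u v : Fin n → ℂ), matT a u (c • v) = (star c) • matT a u v := by
          intro c u v; ext i j
          simp only [matT, Matrix.of_apply, Matrix.smul_apply, Pi.smul_apply, smul_eq_mul,
            star_mul', smul_smul]
          congr 1; ring
        have L4 : ∀ (c : ℂ) (u v : Fin n → ℂ), matT a (c • u) v = c • matT a u v := by
          intro c u v; ext i j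
          simp only [matT, Matrix.of_apply, Matrix.smul_apply, Pi.smul_apply, smul_eq_mul,
            smul_smul]
          congr 1; ring
        have g_add : ∀ X Y : Matrix (Fin n) (Fin n) A,
            Ψ ((e n) (X + Y)) = Ψ ((e n) X) + Ψ ((e n) Y) := by
          intro X Y; rw [map_add, map_add]
        have g_smul : ∀ (c : ℂ) (X : Matrix (Fin n) (Fin n) A),
            Ψ ((e n) (c • X)) = c * Ψ ((e n) X) := by
          intro c X; rw [map_smul, map_smul, smul_eq_mul]
        have h1 := hdiag (u + v) a
        rw [L1, L2, L2, g_add, g_add, g_add, hdiag u a, hdiag v a] at h1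
        have h2 := hdiag (u + Complex.I • v) a
        rw [L1, L2, L2, L3, L4, L4, L3, g_add, g_add, g_add, g_smul, g_smul, g_smul, g_smul,
          hdiag u a, hdiag v a] at h2
        set x := Ψ ((e n) (matT a u v)) with hx
        set y := Ψ ((e n) (matT a v u)) with hy
        rw [Complex.star_def, Complex.conj_I] at h2
        have hkey : (-2 * Complex.I) * x = 0 := by linear_combination h2 - Complex.I * h1
        have h20 : (-2 * Complex.I : ℂ) ≠ 0 := by
          simp [Complex.I_ne_zero]
        exact (mul_eq_zero.mp hkey).resolve_left h20
      -- conclude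
      have hXrep : X = (e n) (∑ i, ∑ j,
          matT (((e n).symm X) i j) (Pi.single i 1) (Pi.single j 1)) := by
        conv_lhs => rw [← (e n).apply_symm_apply X]
        congr 1
        simp only [matT_single]
        exact Matrix.matrix_eq_sum_single _
      rw [hXrep, map_sum, map_sum]
      refine Finset.sum_eq_zero fun i _ => ?_
      rw [map_sum, map_sum]
      exact Finset.sum_eq_zero fun j _ => hall _ _ _
  · -- reverse direction: use n = 1
    intro hmat ψ hpos hvan
    set L : M 1 →ₗ[ℂ] A :=
      { toFun := fun X => (e 1).symm X 0 0
        map_add' := fun X Y => by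
          show (e 1).symm (X + Y) 0 0 = (e 1).symm X 0 0 + (e 1).symm Y 0 0
          rw [map_add, Matrix.add_apply]
        map_smul' := fun c X => by
          show (e 1).symm (c • X) 0 0 = c • ((e 1).symm X 0 0)
          rw [map_smul, Matrix.smul_apply] } with hL
    have hLe : ∀ X : M 1, (e 1) (Matrix.single 0 0 (L X)) = X := by
      intro X
      conv_rhs => rw [← (e 1).apply_symm_apply X]
      congr 1
      ext i j
      rw [Subsingleton.elim i 0, Subsingleton.elim j 0]
      simp [hL]
    have hLnorm : ∀ X : M 1, ‖L X‖ ≤ 1 * ‖X‖ := by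
      intro X
      rw [one_mul, ← hLe X, norm_e_stdBasisMatrix]
      simp [hLe]
    set Lc : M 1 →L[ℂ] A := L.mkContinuous 1 hLnorm with hLc
    have hΨ : ψ.comp Lc = 0 := by
      refine hmat 1 _ (fun X hXpos => ?_) (fun X hXE => ?_)
      · show 0 ≤ ψ (L X)
        refine hpos _ ?_
        rw [StarOrderedRing.nonneg_iff] at hXpos
        induction hXpos using AddSubmonoid.closure_induction with
        | mem x hxx =>
          obtain ⟨s, rfl⟩ := hxx
          show 0 ≤ ((e 1).symm (star s * s)) 0 0
          rw [map_mul, map_star, Matrix.mul_apply, Fin.sum_univ_one, Matrix.star_apply]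
          exact star_mul_self_nonneg _
        | zero =>
          show 0 ≤ ((e 1).symm 0) 0 0
          rw [map_zero]
          exact le_refl _
        | add x y _ _ hx hy =>
          show 0 ≤ ((e 1).symm (x + y)) 0 0
          rw [map_add, Matrix.add_apply]
          exact add_nonneg hx hy
      · exact hvan _ (hXE 0 0)
    ext a
    show ψ a = 0
    have := ContinuousLinearMap.ext_iff.mp hΨ ((e 1) (Matrix.single 0 0 a))
    simp only [ContinuousLinearMap.coe_comp', Function.comp_apply,
      ContinuousLinearMap.zero_apply] at this
    have hLa : Lc ((e 1) (Matrix.single 0 0 a)) = a := by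
      show ((e 1).symm ((e 1) (Matrix.single 0 0 a))) 0 0 = a
      rw [StarAlgEquiv.symm_apply_apply]
      simp
    rw [hLa] at this
    exact this
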